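/- Let 0 ≤ e < 1. For every 2π-periodic continuously differentiable function x: ℝ → ℂ, the integral ∫₀^{2π} (|x'(t)|² − (e cos t)/(1 + e cos t)·|x(t)|²) dt is nonnegative, and it equals zero if and only if there exists c ∈ ℂ such that x(t) = c(1 + e cos t) for all t. -/

import Mathlib

open Real MeasureTheory Set intervalIntegral

/-- For `0 ≤ e < 1` and `x : ℝ → ℂ` a `2π`-periodic `C¹` function, the quadratic form
`∫₀^{2π} (|x'|² − (e cos t)/(1+e cos t)|x|²) dt` is nonnegative, and vanishes iff
`x(t) = c(1 + e cos t)` for some constant `c ∈ ℂ`. -/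
theorem euler_kepler_form_nonneg (e : ℝ) (he0 : 0 ≤ e) (he1 : e < 1)
    (x : ℝ → ℂ) (hx : ContDiff ℝ 1 x) (hper : ∀ t, x (t + 2 * Real.pi) = x t) :
    (0 ≤ ∫ t in (0 : ℝ)..(2 * Real.pi),
        (‖deriv x t‖ ^ 2 - e * Real.cos t / (1 + e * Real.cos t) * ‖x t‖ ^ 2)) ∧
    ((∫ t in (0 : ℝ)..(2 * Real.pi),
        (‖deriv x t‖ ^ 2 - e * Real.cos t / (1 + e * Real.cos t) * ‖x t‖ ^ 2)) = 0 ↔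
      ∃ c : ℂ, ∀ t : ℝ, x t = c * (1 + e * Real.cos t)) := by
  have twopi_pos : (0:ℝ) < 2 * Real.pi := by positivity
  -- positivity of the weight w t = 1 + e cos t
  have hwpos : ∀ t : ℝ, 0 < 1 + e * Real.cos t := by
    intro t
    nlinarith [Real.neg_one_le_cos t, Real.cos_le_one t]
  have hwne : ∀ t : ℝ, (1 + e * Real.cos t) ≠ 0 := fun t => (hwpos t).ne'
  have hwCne : ∀ t : ℝ, ((1 + e * Real.cos t : ℝ) : ℂ) ≠ 0 := fun t =>
    Complex.ofReal_ne_zero.mpr (hwne t)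
  -- differentiability of x
  have hxd : Differentiable ℝ x := hx.differentiable one_ne_zero
  have hxc : Continuous x := hxd.continuous
  have hx'c : Continuous (deriv x) := hx.continuous_deriv le_rfl
  -- p = w'/w
  set p : ℝ → ℝ := fun t => -(e * Real.sin t) / (1 + e * Real.cos t) with hpdef
  have hpc : Continuous p := by
    apply Continuous.div (by fun_prop) (by fun_prop) hwne
  -- the derivative of p
  set P : ℝ → ℝ := fun t =>
      (-(e * Real.cos t) * (1 + e * Real.cos t) - -(e * Real.sin t) * -(e * Real.sin t)) /
        (1 + e * Real.cos t) ^ 2 with hPdef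
  have hPc : Continuous P := by
    apply Continuous.div (by fun_prop) (by fun_prop)
      (fun t => pow_ne_zero 2 (hwne t))
  have hw' : ∀ t : ℝ, HasDerivAt (fun s => 1 + e * Real.cos s) (-(e * Real.sin t)) t := by
    intro t
    have := ((Real.hasDerivAt_cos t).const_mul e).const_add 1
    simpa [mul_comm, mul_neg] using this
  have hp' : ∀ t : ℝ, HasDerivAt p (P t) t := by
    intro t
    exact ((Real.hasDerivAt_sin t).const_mul e).neg.div (hw' t) (hwne t)
  -- re and im components
  have hre : ∀ t : ℝ, HasDerivAt (fun s => (x s).re) ((deriv x t).re) t := fun t =>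
    (Complex.reCLM.hasFDerivAt.comp_hasDerivAt t (hxd t).hasDerivAt)
  have him : ∀ t : ℝ, HasDerivAt (fun s => (x s).im) ((deriv x t).im) t := fun t =>
    (Complex.imCLM.hasFDerivAt.comp_hasDerivAt t (hxd t).hasDerivAt)
  -- the squared-norm function
  set n : ℝ → ℝ := fun t => (x t).re * (x t).re + (x t).im * (x t).im with hndef
  have hnc : Continuous n := by
    apply Continuous.add
    · exact (Complex.continuous_re.comp hxc).mul (Complex.continuous_re.comp hxc)
    · exact (Complex.continuous_im.comp hxc).mul (Complex.continuous_im.comp hxc)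
  have hn_eq : ∀ t, n t = ‖x t‖ ^ 2 := by
    intro t
    rw [hndef]
    simp only [← Complex.normSq_eq_norm_sq, Complex.normSq_apply]
  set N : ℝ → ℝ := fun t =>
      (deriv x t).re * (x t).re + (x t).re * (deriv x t).re +
        ((deriv x t).im * (x t).im + (x t).im * (deriv x t).im) with hNdef
  have hNc : Continuous N := by
    apply Continuous.add
    · exact ((Complex.continuous_re.comp hx'c).mul (Complex.continuous_re.comp hxc)).add
        ((Complex.continuous_re.comp hxc).mul (Complex.continuous_re.comp hx'c))
    · exact ((Complex.continuous_im.comp hx'c).mul (Complex.continuous_im.comp hxc)).add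
        ((Complex.continuous_im.comp hxc).mul (Complex.continuous_im.comp hx'c))
  have hn' : ∀ t : ℝ, HasDerivAt n (N t) t := fun t =>
    (((hre t).mul (hre t)).add ((him t).mul (him t)))
  -- g = p * n and its derivative G
  set g : ℝ → ℝ := fun t => p t * n t with hgdef
  set G : ℝ → ℝ := fun t => P t * n t + p t * N t with hGdef
  have hg' : ∀ t : ℝ, HasDerivAt g (G t) t := fun t => (hp' t).mul (hn' t)
  have hGc : Continuous G := (hPc.mul hnc).add (hpc.mul hNc)
  -- q, the pointwise square
  set q : ℝ → ℝ := fun t => ‖deriv x t - (p t : ℂ) * x t‖ ^ 2 with hqdef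
  have hqc : Continuous q :=
    ((hx'c.sub ((Complex.continuous_ofReal.comp hpc).mul hxc)).norm.pow 2)
  -- the pointwise identity
  have h_id : ∀ t : ℝ, ‖deriv x t‖ ^ 2 - e * Real.cos t / (1 + e * Real.cos t) * ‖x t‖ ^ 2
      = q t + G t := by
    intro t
    have expand : ∀ z : ℂ, ‖z‖ ^ 2 = z.re * z.re + z.im * z.im := fun z => by
      simp only [← Complex.normSq_eq_norm_sq, Complex.normSq_apply]
    rw [hqdef]
    simp only [expand, ← hn_eq, hndef, hGdef, hPdef, hpdef, Complex.sub_re, Complex.sub_im,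
      Complex.mul_re, Complex.mul_im, Complex.ofReal_re, Complex.ofReal_im]
    have hw := hwne t
    field_simp
    ring
  -- integrability
  have hfint : IntervalIntegrable
      (fun t => ‖deriv x t‖ ^ 2 - e * Real.cos t / (1 + e * Real.cos t) * ‖x t‖ ^ 2)
      volume 0 (2 * Real.pi) := by
    apply Continuous.intervalIntegrable
    apply Continuous.sub (hx'c.norm.pow 2)
    exact (Continuous.div (by fun_prop) (by fun_prop) hwne).mul (hxc.norm.pow 2)
  have hqint : IntervalIntegrable q volume 0 (2 * Real.pi) := hqc.intervalIntegrable _ _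
  have hGint : IntervalIntegrable G volume 0 (2 * Real.pi) := hGc.intervalIntegrable _ _
  -- the integral of G vanishes
  have hintG : (∫ t in (0:ℝ)..(2 * Real.pi), G t) = 0 := by
    rw [intervalIntegral.integral_eq_sub_of_hasDerivAt (fun t _ => hg' t) hGint]
    simp [hgdef, hpdef, Real.sin_two_pi]
  -- the key identity
  have hkey : (∫ t in (0:ℝ)..(2 * Real.pi),
      (‖deriv x t‖ ^ 2 - e * Real.cos t / (1 + e * Real.cos t) * ‖x t‖ ^ 2))
      = ∫ t in (0:ℝ)..(2 * Real.pi), q t := by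
    rw [intervalIntegral.integral_congr (g := fun t => q t + G t) (fun t _ => h_id t),
      intervalIntegral.integral_add hqint hGint, hintG, add_zero]
  constructor
  · rw [hkey]
    exact intervalIntegral.integral_nonneg twopi_pos.le (fun t _ => by positivity)
  constructor
  · -- zero integral implies x = c * (1 + e cos t)
    intro h0
    rw [hkey] at h0
    -- q vanishes a.e. on (0, 2π]
    have hae : q =ᵐ[volume.restrict (Ioc 0 (2 * Real.pi))] 0 := by
      refine (intervalIntegral.integral_eq_zero_iff_of_le_of_nonneg_ae twopi_pos.le ?_ hqint).mp h0
      exact Filter.Eventually.of_forall (fun t => by positivity)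
    -- q vanishes on [0, 2π]
    have hq0 : ∀ s ∈ Icc (0:ℝ) (2 * Real.pi), q s = 0 := by
      have hopen : IsOpen {t | q t ≠ 0} := isOpen_ne_fun hqc continuous_const
      have hm0 : volume ({t | q t ≠ 0} ∩ Ioc 0 (2 * Real.pi)) = 0 := by
        have h1 : volume.restrict (Ioc 0 (2 * Real.pi)) {t | q t ≠ 0} = 0 := by
          have h2 := hae
          rw [Filter.EventuallyEq, MeasureTheory.ae_iff] at h2
          simpa using h2
        rw [← Measure.restrict_apply hopen.measurableSet]
        exact h1
      have hIoo : ∀ s ∈ Ioo (0:ℝ) (2 * Real.pi), q s = 0 := by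
        intro s hs
        by_contra hne
        have hU : IsOpen ({t | q t ≠ 0} ∩ Ioo 0 (2 * Real.pi)) := hopen.inter isOpen_Ioo
        have hpos : 0 < volume ({t | q t ≠ 0} ∩ Ioo 0 (2 * Real.pi)) :=
          hU.measure_pos volume ⟨s, hne, hs⟩
        have hsub : ({t | q t ≠ 0} ∩ Ioo 0 (2 * Real.pi)) ⊆
            ({t | q t ≠ 0} ∩ Ioc 0 (2 * Real.pi)) :=
          inter_subset_inter_right _ Ioo_subset_Ioc_self
        exact absurd (le_trans (measure_mono hsub) hm0.le) (not_le.mpr hpos)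
      intro s hs
      have hclosed : IsClosed {t | q t = 0} := isClosed_eq hqc continuous_const
      have : Icc (0:ℝ) (2 * Real.pi) ⊆ {t | q t = 0} := by
        rw [← closure_Ioo twopi_pos.ne]
        exact closure_minimal hIoo hclosed
      exact this hs
    -- q is periodic
    have hx'per : ∀ t, deriv x (t + 2 * Real.pi) = deriv x t := by
      intro t
      have h1 := deriv_comp_add_const x (2 * Real.pi) t
      have h2 : (fun s => x (s + 2 * Real.pi)) = x := funext hper
      rw [h2] at h1
      exact h1.symm
    have hpper : ∀ t, p (t + 2 * Real.pi) = p t := by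
      intro t
      rw [hpdef]
      simp [Real.cos_add_two_pi, Real.sin_add_two_pi]
    have hqper : Function.Periodic q (2 * Real.pi) := by
      intro t
      show ‖deriv x (t + 2 * Real.pi) - (p (t + 2 * Real.pi) : ℂ) * x (t + 2 * Real.pi)‖ ^ 2
        = ‖deriv x t - (p t : ℂ) * x t‖ ^ 2
      rw [hper t, hx'per t, hpper t]
    have hq0all : ∀ t : ℝ, q t = 0 := by
      intro t
      obtain ⟨y, hy, hqy⟩ := hqper.exists_mem_Ico₀ twopi_pos t
      rw [hqy]
      exact hq0 y ⟨hy.1, hy.2.le⟩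
    -- hence the ODE x' = p x holds everywhere
    have hODE : ∀ t : ℝ, deriv x t = (p t : ℂ) * x t := by
      intro t
      have h : ‖deriv x t - (p t : ℂ) * x t‖ ^ 2 = 0 := hq0all t
      rw [pow_eq_zero_iff two_ne_zero, norm_eq_zero, sub_eq_zero] at h
      exact h
    -- the quotient u = x / w is constant
    set u : ℝ → ℂ := fun t => x t / ((1 + e * Real.cos t : ℝ) : ℂ) with hudef
    have hwc' : ∀ t : ℝ, HasDerivAt (fun s => ((1 + e * Real.cos s : ℝ) : ℂ))
        ((-(e * Real.sin t) : ℝ) : ℂ) t := fun t => (hw' t).ofReal_comp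
    have hu' : ∀ t : ℝ, HasDerivAt u 0 t := by
      intro t
      have h := ((hxd t).hasDerivAt.div (hwc' t) (hwCne t))
      have hne : ((1:ℂ) + (e:ℂ) * Complex.cos (t:ℂ)) ≠ 0 := by
        have h3 := hwCne t
        push_cast at h3
        exact h3
      have hV : (deriv x t * ((1 + e * Real.cos t : ℝ) : ℂ)
          - x t * ((-(e * Real.sin t) : ℝ) : ℂ)) / ((1 + e * Real.cos t : ℝ) : ℂ) ^ 2
          = 0 := by
        rw [hODE t, hpdef, div_eq_zero_iff]
        left
        push_cast
        field_simp
        ring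
      rw [hV] at h
      exact h
    have huconst : ∀ t : ℝ, u t = u 0 := by
      intro t
      exact is_const_of_deriv_eq_zero (fun s => (hu' s).differentiableAt)
        (fun s => (hu' s).deriv) t 0
    refine ⟨u 0, fun t => ?_⟩
    have h := huconst t
    have h4 : x t = u 0 * ((1 + e * Real.cos t : ℝ) : ℂ) := by
      rw [← h, hudef]
      rw [div_mul_cancel₀ _ (hwCne t)]
    rw [h4]
    push_cast
    ring
  · -- converse: x = c (1 + e cos) gives zero integral
    rintro ⟨c, hc⟩
    rw [hkey]
    have hxeq : x = fun s => c * ((1 + e * Real.cos s : ℝ) : ℂ) := by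
      funext s
      rw [hc s]
      push_cast
      ring
    have hq0 : ∀ t : ℝ, q t = 0 := by
      intro t
      have hd : HasDerivAt x (c * ((-(e * Real.sin t) : ℝ) : ℂ)) t := by
        rw [hxeq]
        exact ((hw' t).ofReal_comp).const_mul c
      show ‖deriv x t - (p t : ℂ) * x t‖ ^ 2 = 0
      rw [hd.deriv]
      have hne : ((1:ℂ) + (e:ℂ) * Complex.cos (t:ℂ)) ≠ 0 := by
        have h3 := hwCne t
        push_cast at h3
        exact h3
      have h5 : c * ((-(e * Real.sin t) : ℝ) : ℂ) - (p t : ℂ) * x t = 0 := by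
        rw [hc t, hpdef]
        push_cast
        field_simp
        ring
      rw [h5, norm_zero]
      norm_num
    rw [intervalIntegral.integral_congr (g := fun _ => (0:ℝ)) (fun t _ => hq0 t)]
    simp
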